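/- arXiv:2212.07780 — 2 statements merged into one kernel-verified Lean document; each statement's English description precedes it below -/
import Mathlib

section
/- Let A, B be v×v Hermitian matrices with −B ≤ A ≤ B (i.e., B − A and B + A are positive semidefinite). Then for every j = 1, ..., v, the j-th largest singular value of A satisfies t_j(A) ≤ t_j(B ⊕ B), where B ⊕ B is the 2v×2v block-diagonal direct sum. -/
open ComplexOrder

/-- The singular values of a complex square matrix, arranged in decreasing order:
the eigenvalues of `(Aᴴ * A) ^ (1/2)`, i.e. the square roots of the eigenvalues of
`Aᴴ * A`, sorted decreasingly. -/
noncomputable def sval {n : ℕ} (A : Matrix (Fin n) (Fin n) ℂ) : Fin n → ℝ :=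
  fun j =>
    let e : Fin n → ℝ := fun i =>
      Real.sqrt ((Matrix.posSemidef_conjTranspose_mul_self A).isHermitian.eigenvalues i)
    e (Tuple.sort (fun i => -(e i)) j)

/-- The block-diagonal direct sum of two square matrices, indexed by `Fin (n + n)`. -/
noncomputable def dirSum {n : ℕ} (A B : Matrix (Fin n) (Fin n) ℂ) :
    Matrix (Fin (n + n)) (Fin (n + n)) ℂ :=
  Matrix.reindex finSumFinEquiv finSumFinEquiv (Matrix.fromBlocks A 0 0 B)


section SvalAux
open Finset Matrix Submodule Set
open scoped Classical

section Core
variable {n : ℕ}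

lemma repr_lemma {ι : Type*} [Fintype ι] {f : ι → EuclideanSpace ℂ (Fin n)}
    (hf : Orthonormal ℂ f) (N : Matrix (Fin n) (Fin n) ℂ) (μ : ι → ℝ)
    (hN : ∀ k, N *ᵥ ⇑(f k) = (μ k : ℂ) • ⇑(f k))
    {x : EuclideanSpace ℂ (Fin n)} (hx : x ∈ Submodule.span ℂ (Set.range f)) :
    ∃ c : ι → ℂ,
      (x = ∑ k, c k • f k) ∧
      ‖x‖ ^ 2 = ∑ k, ‖c k‖ ^ 2 ∧
      (dotProduct (star (x : Fin n → ℂ)) (N *ᵥ x)).re = ∑ k, μ k * ‖c k‖ ^ 2 := by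
  obtain ⟨c, hc⟩ := (mem_span_range_iff_exists_fun ℂ).mp hx
  have hre : ∀ z : ℂ, (starRingEnd ℂ) z * z = ((‖z‖ ^ 2 : ℝ) : ℂ) := fun z => by
    rw [RCLike.conj_mul z]; norm_cast
  have hnorm : ‖x‖ ^ 2 = ∑ k, ‖c k‖ ^ 2 := by
    have h1 : (inner ℂ x x : ℂ) = ∑ k, (starRingEnd ℂ) (c k) * c k := by
      conv_lhs => rw [← hc]
      rw [hf.inner_sum c c Finset.univ]
    have h2 := inner_self_eq_norm_sq (𝕜 := ℂ) x
    rw [h1] at h2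
    rw [← h2]
    simp only [hre, ← Complex.ofReal_sum]
    exact Complex.ofReal_re _
  refine ⟨c, hc.symm, hnorm, ?_⟩
  have hcoe : ⇑(∑ k, c k • f k : EuclideanSpace ℂ (Fin n)) = ∑ k, c k • ⇑(f k) := by simp [WithLp.ofLp_sum]
  have hmv : N *ᵥ ⇑x = ∑ k, ((μ k : ℂ) * c k) • ⇑(f k) := by
    conv_lhs => rw [← hc]
    rw [hcoe, show (N *ᵥ ∑ k, c k • ⇑(f k)) = ∑ k, N *ᵥ (c k • ⇑(f k)) from
      map_sum N.mulVecLin _ _]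
    refine Finset.sum_congr rfl fun k _ => ?_
    rw [show N *ᵥ (c k • ⇑(f k)) = c k • (N *ᵥ ⇑(f k)) from N.mulVecLin.map_smul _ _, hN k,
      smul_smul, mul_comm]
  have hdp : dotProduct (star (x : Fin n → ℂ)) (N *ᵥ x)
      = inner ℂ x ((WithLp.equiv 2 _).symm (N *ᵥ ⇑x) : EuclideanSpace ℂ (Fin n)) := by
    simp [PiLp.inner_apply, dotProduct, mul_comm]
  rw [hdp, hmv]
  have heq : ((WithLp.equiv 2 _).symm (∑ k, ((μ k : ℂ) * c k) • ⇑(f k)) : EuclideanSpace ℂ (Fin n))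
      = ∑ k, ((μ k : ℂ) * c k) • f k := by simp [WithLp.toLp_sum]
  rw [heq]
  have h3 : (inner ℂ x (∑ k, ((μ k : ℂ) * c k) • f k) : ℂ)
      = ∑ k, (starRingEnd ℂ) (c k) * ((μ k : ℂ) * c k) := by
    conv_lhs => rw [← hc]
    exact hf.inner_sum c (fun k => (μ k : ℂ) * c k) Finset.univ
  rw [h3]
  rw [show ((∑ k, (starRingEnd ℂ) (c k) * ((μ k : ℂ) * c k)).re : ℝ)
      = RCLike.re (∑ k, ((μ k : ℝ) : ℂ) * ((starRingEnd ℂ) (c k) * c k)) by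
    congr 1; exact Finset.sum_congr rfl fun k _ => by ring]
  rw [map_sum]
  exact Finset.sum_congr rfl fun k _ => by
    simp [RCLike.conj_mul (K := ℂ), ← Complex.ofReal_mul, ← Complex.ofReal_pow]

lemma quad_le_on_span {ι : Type*} [Fintype ι] {f : ι → EuclideanSpace ℂ (Fin n)}
    (hf : Orthonormal ℂ f) (N : Matrix (Fin n) (Fin n) ℂ) (μ : ι → ℝ)
    (hN : ∀ k, N *ᵥ ⇑(f k) = (μ k : ℂ) • ⇑(f k)) {c : ℝ} (hμ : ∀ k, μ k ≤ c)
    {x : EuclideanSpace ℂ (Fin n)} (hx : x ∈ Submodule.span ℂ (Set.range f)) :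
    (dotProduct (star (x : Fin n → ℂ)) (N *ᵥ x)).re ≤ c * ‖x‖ ^ 2 := by
  obtain ⟨cf, -, hn, hq⟩ := repr_lemma hf N μ hN hx
  rw [hq, hn, Finset.mul_sum]
  exact Finset.sum_le_sum fun k _ =>
    mul_le_mul_of_nonneg_right (hμ k) (by positivity)

lemma lt_quad_on_span {ι : Type*} [Fintype ι] {f : ι → EuclideanSpace ℂ (Fin n)}
    (hf : Orthonormal ℂ f) (N : Matrix (Fin n) (Fin n) ℂ) (μ : ι → ℝ)
    (hN : ∀ k, N *ᵥ ⇑(f k) = (μ k : ℂ) • ⇑(f k)) {c : ℝ} (hμ : ∀ k, c < μ k)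
    {x : EuclideanSpace ℂ (Fin n)} (hx : x ∈ Submodule.span ℂ (Set.range f)) (hx0 : x ≠ 0) :
    c * ‖x‖ ^ 2 < (dotProduct (star (x : Fin n → ℂ)) (N *ᵥ x)).re := by
  obtain ⟨cf, hxe, hn, hq⟩ := repr_lemma hf N μ hN hx
  rw [hq, hn, Finset.mul_sum]
  have hex : ∃ k, cf k ≠ 0 := by
    by_contra h
    push_neg at h
    exact hx0 (by rw [hxe]; simp [h])
  obtain ⟨k₀, hk₀⟩ := hex
  refine Finset.sum_lt_sum (fun k _ => mul_le_mul_of_nonneg_right (hμ k).le (by positivity))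
    ⟨k₀, Finset.mem_univ _, ?_⟩
  exact mul_lt_mul_of_pos_right (hμ k₀) (pow_pos (norm_pos_iff.mpr hk₀) 2)

lemma quad_lt_on_span {ι : Type*} [Fintype ι] {f : ι → EuclideanSpace ℂ (Fin n)}
    (hf : Orthonormal ℂ f) (N : Matrix (Fin n) (Fin n) ℂ) (μ : ι → ℝ)
    (hN : ∀ k, N *ᵥ ⇑(f k) = (μ k : ℂ) • ⇑(f k)) {c : ℝ} (hμ : ∀ k, μ k < c)
    {x : EuclideanSpace ℂ (Fin n)} (hx : x ∈ Submodule.span ℂ (Set.range f)) (hx0 : x ≠ 0) :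
    (dotProduct (star (x : Fin n → ℂ)) (N *ᵥ x)).re < c * ‖x‖ ^ 2 := by
  obtain ⟨cf, hxe, hn, hq⟩ := repr_lemma hf N μ hN hx
  rw [hq, hn, Finset.mul_sum]
  have hex : ∃ k, cf k ≠ 0 := by
    by_contra h
    push_neg at h
    exact hx0 (by rw [hxe]; simp [h])
  obtain ⟨k₀, hk₀⟩ := hex
  refine Finset.sum_lt_sum (fun k _ => mul_le_mul_of_nonneg_right (hμ k).le (by positivity))
    ⟨k₀, Finset.mem_univ _, mul_lt_mul_of_pos_right (hμ k₀) (pow_pos (norm_pos_iff.mpr hk₀) 2)⟩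

lemma exists_ne_zero_mem_inf {W W' : Submodule ℂ (EuclideanSpace ℂ (Fin n))}
    (h : n < Module.finrank ℂ W + Module.finrank ℂ W') :
    ∃ x : EuclideanSpace ℂ (Fin n), x ∈ W ⊓ W' ∧ x ≠ 0 := by
  have hsum := Submodule.finrank_sup_add_finrank_inf_eq W W'
  have hle : Module.finrank ℂ ↥(W ⊔ W') ≤ n := by
    simpa [finrank_euclideanSpace_fin] using Submodule.finrank_le (W ⊔ W')
  have hpos : 0 < Module.finrank ℂ ↥(W ⊓ W') := by omega
  have hne : W ⊓ W' ≠ ⊥ := by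
    intro hbot
    rw [hbot, finrank_bot] at hpos
    exact lt_irrefl 0 hpos
  exact Submodule.exists_mem_ne_zero_of_ne_bot hne

/-- number of eigenvalues exceeding `t` -/
noncomputable def cnt {M : Matrix (Fin n) (Fin n) ℂ} (hM : M.IsHermitian) (t : ℝ) : ℕ :=
  (Finset.univ.filter fun i => t < hM.eigenvalues i).card

lemma orthonormal_sub {M : Matrix (Fin n) (Fin n) ℂ} (hM : M.IsHermitian) (S : Finset (Fin n)) :
    Orthonormal ℂ (fun i : {i // i ∈ S} => hM.eigenvectorBasis i.1) :=
  hM.eigenvectorBasis.orthonormal.comp _ Subtype.val_injective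

lemma finrank_span_orthonormal {ι : Type*} [Fintype ι] {f : ι → EuclideanSpace ℂ (Fin n)}
    (hf : Orthonormal ℂ f) :
    Module.finrank ℂ (Submodule.span ℂ (Set.range f)) = Fintype.card ι :=
  finrank_span_eq_card hf.linearIndependent

/-- P2: a subspace with strict quadratic lower bound t has dim at most `cnt t`. -/
lemma card_le_cnt {M : Matrix (Fin n) (Fin n) ℂ} (hM : M.IsHermitian) (t : ℝ)
    {ι : Type*} [Fintype ι] {f : ι → EuclideanSpace ℂ (Fin n)} (hf : Orthonormal ℂ f)
    (hq : ∀ x : EuclideanSpace ℂ (Fin n), x ∈ Submodule.span ℂ (Set.range f) → x ≠ 0 →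
      t * ‖x‖ ^ 2 < (dotProduct (star (x : Fin n → ℂ)) (M *ᵥ x)).re) :
    Fintype.card ι ≤ cnt hM t := by
  by_contra hcon
  push_neg at hcon
  set S : Finset (Fin n) := Finset.univ.filter (fun i => ¬ t < hM.eigenvalues i) with hS
  have hg := orthonormal_sub hM S
  have hcardS : S.card + cnt hM t = n := by
    have := Finset.card_filter_add_card_filter_not
      (s := (Finset.univ : Finset (Fin n))) (p := fun i => t < hM.eigenvalues i)
    simp only [Finset.card_univ, Fintype.card_fin] at this
    unfold S
    unfold cnt
    omega
  obtain ⟨x, hxmem, hx0⟩ := exists_ne_zero_mem_inf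
    (W := Submodule.span ℂ (Set.range f))
    (W' := Submodule.span ℂ (Set.range (fun i : {i // i ∈ S} => hM.eigenvectorBasis i.1)))
    (by rw [finrank_span_orthonormal hf, finrank_span_orthonormal hg, Fintype.card_coe]; omega)
  have h1 := hq x hxmem.1 hx0
  have h2 := quad_le_on_span hg M (fun i => hM.eigenvalues i.1)
    (fun k => hM.mulVec_eigenvectorBasis k.1)
    (fun k => by
      have hk := k.2
      simp only [hS, Finset.mem_filter] at hk
      exact le_of_not_gt hk.2)
    hxmem.2
  exact lt_irrefl _ (h1.trans_le h2)

/-- P1: a subspace with quadratic upper bound t forces `cnt t` to be small. -/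
lemma cnt_add_card_le {M : Matrix (Fin n) (Fin n) ℂ} (hM : M.IsHermitian) (t : ℝ)
    {κ : Type*} [Fintype κ] {g : κ → EuclideanSpace ℂ (Fin n)} (hg : Orthonormal ℂ g)
    (hq : ∀ x : EuclideanSpace ℂ (Fin n), x ∈ Submodule.span ℂ (Set.range g) →
      (dotProduct (star (x : Fin n → ℂ)) (M *ᵥ x)).re ≤ t * ‖x‖ ^ 2) :
    cnt hM t + Fintype.card κ ≤ n := by
  by_contra hcon
  push_neg at hcon
  set S : Finset (Fin n) := Finset.univ.filter (fun i => t < hM.eigenvalues i) with hS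
  have hf := orthonormal_sub hM S
  have hcardS : S.card = cnt hM t := rfl
  obtain ⟨x, hxmem, hx0⟩ := exists_ne_zero_mem_inf
    (W := Submodule.span ℂ (Set.range (fun i : {i // i ∈ S} => hM.eigenvectorBasis i.1)))
    (W' := Submodule.span ℂ (Set.range g))
    (by rw [finrank_span_orthonormal hf, finrank_span_orthonormal hg, Fintype.card_coe, hcardS]
        omega)
  have h1 := lt_quad_on_span hf M (fun i => hM.eigenvalues i.1)
    (fun k => hM.mulVec_eigenvectorBasis k.1)
    (c := t)
    (fun k => by
      have hk := k.2
      simp only [hS, Finset.mem_filter] at hk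
      exact hk.2)
    hxmem.1 hx0
  have h2 := hq x hxmem.2
  exact lt_irrefl _ (h1.trans_le h2)

end Core

section DirSum
variable {v : ℕ}

/-- embedding into the first block -/
def emb1 (u : Fin v → ℂ) : Fin (v + v) → ℂ := (Sum.elim u 0) ∘ finSumFinEquiv.symm
/-- embedding into the second block -/
def emb2 (u : Fin v → ℂ) : Fin (v + v) → ℂ := (Sum.elim (0 : Fin v → ℂ) u) ∘ finSumFinEquiv.symm

lemma dirSum_mulVec_emb1 (M N : Matrix (Fin v) (Fin v) ℂ) (u : Fin v → ℂ) :
    dirSum M N *ᵥ emb1 u = emb1 (M *ᵥ u) := by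
  rw [dirSum, Matrix.reindex_apply, Matrix.submatrix_mulVec_equiv]
  have h1 : (emb1 u) ∘ (finSumFinEquiv.symm).symm = Sum.elim u 0 := by
    ext i; simp [emb1]
  rw [h1, Matrix.fromBlocks_mulVec]
  ext i
  simp [emb1]

lemma dirSum_mulVec_emb2 (M N : Matrix (Fin v) (Fin v) ℂ) (u : Fin v → ℂ) :
    dirSum M N *ᵥ emb2 u = emb2 (N *ᵥ u) := by
  rw [dirSum, Matrix.reindex_apply, Matrix.submatrix_mulVec_equiv]
  have h1 : (emb2 u) ∘ (finSumFinEquiv.symm).symm = Sum.elim (0 : Fin v → ℂ) u := by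
    ext i; simp [emb2]
  rw [h1, Matrix.fromBlocks_mulVec]
  ext i
  simp [emb2]

lemma dirSum_isHermitian {B : Matrix (Fin v) (Fin v) ℂ} (hB : B.IsHermitian) :
    (dirSum B B).IsHermitian := by
  unfold dirSum
  rw [Matrix.IsHermitian, Matrix.reindex_apply, Matrix.conjTranspose_submatrix]
  congr 1
  rw [Matrix.fromBlocks_conjTranspose]
  simp [hB.eq]

/-- as EuclideanSpace elements -/
noncomputable def E1 (u : EuclideanSpace ℂ (Fin v)) : EuclideanSpace ℂ (Fin (v + v)) :=
  (WithLp.equiv 2 _).symm (emb1 ⇑u)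
noncomputable def E2 (u : EuclideanSpace ℂ (Fin v)) : EuclideanSpace ℂ (Fin (v + v)) :=
  (WithLp.equiv 2 _).symm (emb2 ⇑u)

lemma E1_apply_equiv (u : EuclideanSpace ℂ (Fin v)) (j : Fin v ⊕ Fin v) :
    (E1 u) (finSumFinEquiv j) = Sum.elim (⇑u) (0 : Fin v → ℂ) j := by
  simp only [E1, emb1]
  show (Sum.elim (⇑u) 0 ∘ ⇑finSumFinEquiv.symm) (finSumFinEquiv j) = _
  simp

lemma E2_apply_equiv (u : EuclideanSpace ℂ (Fin v)) (j : Fin v ⊕ Fin v) :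
    (E2 u) (finSumFinEquiv j) = Sum.elim (0 : Fin v → ℂ) (⇑u) j := by
  simp only [E2, emb2]
  show (Sum.elim (0 : Fin v → ℂ) (⇑u) ∘ ⇑finSumFinEquiv.symm) (finSumFinEquiv j) = _
  simp

lemma inner_E_sum (x y : EuclideanSpace ℂ (Fin (v+v))) :
    (inner ℂ x y : ℂ) = ∑ j : Fin v ⊕ Fin v,
      (starRingEnd ℂ) (x (finSumFinEquiv j)) * y (finSumFinEquiv j) := by
  rw [PiLp.inner_apply]
  exact (Fintype.sum_equiv finSumFinEquiv
    (fun j => (starRingEnd ℂ) (x (finSumFinEquiv j)) * y (finSumFinEquiv j))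
    (fun i => inner ℂ (x i) (y i)) (fun j => by simp [mul_comm])).symm

lemma inner_E1_E1 (u w : EuclideanSpace ℂ (Fin v)) :
    (inner ℂ (E1 u) (E1 w) : ℂ) = inner ℂ u w := by
  rw [inner_E_sum, PiLp.inner_apply]
  simp only [E1_apply_equiv]
  rw [Fintype.sum_sum_type]
  simp [mul_comm]

lemma inner_E2_E2 (u w : EuclideanSpace ℂ (Fin v)) :
    (inner ℂ (E2 u) (E2 w) : ℂ) = inner ℂ u w := by
  rw [inner_E_sum, PiLp.inner_apply]
  simp only [E2_apply_equiv]
  rw [Fintype.sum_sum_type]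
  simp [mul_comm]

lemma inner_E1_E2 (u w : EuclideanSpace ℂ (Fin v)) :
    (inner ℂ (E1 u) (E2 w) : ℂ) = 0 := by
  rw [inner_E_sum]
  simp only [E1_apply_equiv, E2_apply_equiv]
  rw [Fintype.sum_sum_type]
  simp

lemma inner_E2_E1 (u w : EuclideanSpace ℂ (Fin v)) :
    (inner ℂ (E2 u) (E1 w) : ℂ) = 0 := by
  rw [inner_E_sum]
  simp only [E1_apply_equiv, E2_apply_equiv]
  rw [Fintype.sum_sum_type]
  simp

end DirSum

section Steps
variable {v : ℕ}

lemma re_quad_mono {P Q : Matrix (Fin v) (Fin v) ℂ} (h : (Q - P).PosSemidef) (x : Fin v → ℂ) :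
    (dotProduct (star x) (P *ᵥ x)).re ≤ (dotProduct (star x) (Q *ᵥ x)).re := by
  have h0 := h.dotProduct_mulVec_nonneg x
  rw [Matrix.sub_mulVec, dotProduct_sub] at h0
  have := (Complex.le_def.mp h0).1
  simp only [Complex.zero_re, Complex.sub_re] at this
  linarith

lemma re_quad_neg {P Q : Matrix (Fin v) (Fin v) ℂ} (h : (Q + P).PosSemidef) (x : Fin v → ℂ) :
    -(dotProduct (star x) (P *ᵥ x)).re ≤ (dotProduct (star x) (Q *ᵥ x)).re := by
  have h0 := h.dotProduct_mulVec_nonneg x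
  rw [Matrix.add_mulVec, dotProduct_add] at h0
  have := (Complex.le_def.mp h0).1
  simp only [Complex.zero_re, Complex.add_re] at this
  linarith

/-- L3 : Weyl counting, `cnt A t ≤ cnt B t` when `A ≤ B`. -/
lemma cnt_mono {A B : Matrix (Fin v) (Fin v) ℂ} (hA : A.IsHermitian) (hB : B.IsHermitian)
    (h : (B - A).PosSemidef) (t : ℝ) : cnt hA t ≤ cnt hB t := by
  set S : Finset (Fin v) := Finset.univ.filter (fun i => t < hA.eigenvalues i) with hS
  have hf := orthonormal_sub hA S
  have hcard : Fintype.card {i // i ∈ S} = cnt hA t := Fintype.card_coe S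
  rw [← hcard]
  refine card_le_cnt hB t hf (fun x hx hx0 => ?_)
  have hlt := lt_quad_on_span hf A (fun i => hA.eigenvalues i.1)
    (fun k => hA.mulVec_eigenvectorBasis k.1)
    (c := t)
    (fun k => by have hk := k.2; simp only [hS, Finset.mem_filter] at hk; exact hk.2)
    hx hx0
  exact hlt.trans_le (re_quad_mono h _)

/-- L4 : counting of very negative eigenvalues of `A`. -/
lemma cnt_neg_le {A B : Matrix (Fin v) (Fin v) ℂ} (hA : A.IsHermitian) (hB : B.IsHermitian)
    (h : (B + A).PosSemidef) (t : ℝ) :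
    (Finset.univ.filter (fun i => hA.eigenvalues i < -t)).card ≤ cnt hB t := by
  set S : Finset (Fin v) := Finset.univ.filter (fun i => hA.eigenvalues i < -t) with hS
  have hf := orthonormal_sub hA S
  have hcard : Fintype.card {i // i ∈ S} = S.card := Fintype.card_coe S
  rw [← hcard]
  refine card_le_cnt hB t hf (fun x hx hx0 => ?_)
  have hlt := quad_lt_on_span hf A (fun i => hA.eigenvalues i.1)
    (fun k => hA.mulVec_eigenvectorBasis k.1)
    (c := -t)
    (fun k => by have hk := k.2; simp only [hS, Finset.mem_filter] at hk; exact hk.2)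
    hx hx0
  have hmono := re_quad_neg h (x : Fin v → ℂ)
  linarith

/-- L2 : split of absolute-value counting. -/
lemma cnt_abs_split {A : Matrix (Fin v) (Fin v) ℂ} (hA : A.IsHermitian) (t : ℝ) :
    (Finset.univ.filter (fun i => t < |hA.eigenvalues i|)).card ≤
      cnt hA t + (Finset.univ.filter (fun i => hA.eigenvalues i < -t)).card := by
  have hsub : (Finset.univ.filter (fun i => t < |hA.eigenvalues i|)) ⊆
      (Finset.univ.filter (fun i => t < hA.eigenvalues i)) ∪
      (Finset.univ.filter (fun i => hA.eigenvalues i < -t)) := by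
    intro i hi
    simp only [Finset.mem_filter, Finset.mem_univ, true_and] at hi
    rcases lt_abs.mp hi with h | h
    · exact Finset.mem_union_left _ (by simp [h])
    · exact Finset.mem_union_right _ (by simp [lt_neg.mp h])
  calc (Finset.univ.filter (fun i => t < |hA.eigenvalues i|)).card
      ≤ _ := Finset.card_le_card hsub
    _ ≤ _ := Finset.card_union_le _ _
/-- eigenvectors of `A` are eigenvectors of `AᴴA` with squared eigenvalue. -/
lemma conjTranspose_mul_self_mulVec {A : Matrix (Fin v) (Fin v) ℂ} (hA : A.IsHermitian)
    (i : Fin v) :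
    (Aᴴ * A) *ᵥ ⇑(hA.eigenvectorBasis i) =
      ((hA.eigenvalues i ^ 2 : ℝ) : ℂ) • ⇑(hA.eigenvectorBasis i) := by
  rw [show Aᴴ = A from hA, ← Matrix.mulVec_mulVec, hA.mulVec_eigenvectorBasis,
    Matrix.mulVec_smul, hA.mulVec_eigenvectorBasis, smul_smul]
  norm_cast
  rw [sq]

/-- L1 : counting the eigenvalues of `AᴴA`. -/
lemma cnt_sq_le {A : Matrix (Fin v) (Fin v) ℂ} (hA : A.IsHermitian) (t : ℝ) :
    cnt (Matrix.posSemidef_conjTranspose_mul_self A).isHermitian (t ^ 2) ≤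
      (Finset.univ.filter (fun i => t < |hA.eigenvalues i|)).card := by
  set T : Finset (Fin v) := Finset.univ.filter (fun i => ¬ t < |hA.eigenvalues i|) with hT
  have hg := orthonormal_sub hA T
  have hkey := cnt_add_card_le (Matrix.posSemidef_conjTranspose_mul_self A).isHermitian (t ^ 2)
    hg (fun x hx => quad_le_on_span hg (Aᴴ * A) (fun i => hA.eigenvalues i.1 ^ 2)
      (fun k => conjTranspose_mul_self_mulVec hA k.1)
      (fun k => by
        have hk := k.2
        simp only [hT, Finset.mem_filter, not_lt] at hk
        have h1 := hk.2
        exact sq_le_sq' (neg_le_of_abs_le h1) (le_of_abs_le h1))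
      hx)
  have hsplit := Finset.card_filter_add_card_filter_not
    (s := (Finset.univ : Finset (Fin v))) (p := fun i => t < |hA.eigenvalues i|)
  simp only [Finset.card_univ, Fintype.card_fin] at hsplit
  rw [Fintype.card_coe] at hkey
  have hTeq : T.card = (Finset.univ.filter (fun a => ¬ t < |hA.eigenvalues a|)).card := by
    rw [hT]
  omega

/-- the doubled orthonormal family in the direct sum space. -/
lemma orthonormal_E1E2 {ι κ : Type*} {f : ι → EuclideanSpace ℂ (Fin v)}
    {g : κ → EuclideanSpace ℂ (Fin v)} (hf : Orthonormal ℂ f) (hg : Orthonormal ℂ g) :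
    Orthonormal ℂ (Sum.elim (fun i => E1 (f i)) (fun j => E2 (g j))) := by
  rw [orthonormal_iff_ite]
  intro k l
  rcases k with i | i <;> rcases l with j | j
  · rw [Sum.elim_inl, Sum.elim_inl, inner_E1_E1, orthonormal_iff_ite.mp hf i j]
    simp
  · rw [Sum.elim_inl, Sum.elim_inr, inner_E1_E2]
    simp
  · rw [Sum.elim_inr, Sum.elim_inl, inner_E2_E1]
    simp
  · rw [Sum.elim_inr, Sum.elim_inr, inner_E2_E2, orthonormal_iff_ite.mp hg i j]
    simp

lemma emb1_real_smul (a : ℝ) (u : Fin v → ℂ) : emb1 (a • u) = a • emb1 u := by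
  ext i
  cases h : finSumFinEquiv.symm i <;> simp [emb1, h]

lemma emb2_real_smul (a : ℝ) (u : Fin v → ℂ) : emb2 (a • u) = a • emb2 u := by
  ext i
  cases h : finSumFinEquiv.symm i <;> simp [emb2, h]

/-- L5 : lower bound for the count of `DᴴD` where `D = dirSum B B`. -/
lemma two_cnt_le {B : Matrix (Fin v) (Fin v) ℂ} (hB : B.IsHermitian) {t : ℝ} (ht : 0 ≤ t) :
    2 * cnt hB t ≤
      cnt (Matrix.posSemidef_conjTranspose_mul_self (dirSum B B)).isHermitian (t ^ 2) := by
  set D := dirSum B B with hD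
  have hDh : Dᴴ = D := dirSum_isHermitian hB
  set S : Finset (Fin v) := Finset.univ.filter (fun i => t < hB.eigenvalues i) with hS
  set F : ({i // i ∈ S} ⊕ {i // i ∈ S}) → EuclideanSpace ℂ (Fin (v + v)) :=
    Sum.elim (fun i => E1 (hB.eigenvectorBasis i.1)) (fun i => E2 (hB.eigenvectorBasis i.1))
    with hF
  have hFo : Orthonormal ℂ F := orthonormal_E1E2 (orthonormal_sub hB S) (orthonormal_sub hB S)
  set μ : ({i // i ∈ S} ⊕ {i // i ∈ S}) → ℝ :=
    Sum.elim (fun i => hB.eigenvalues i.1 ^ 2) (fun i => hB.eigenvalues i.1 ^ 2) with hμ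
  have hNF : ∀ k, (Dᴴ * D) *ᵥ ⇑(F k) = ((μ k : ℝ) : ℂ) • ⇑(F k) := by
    rintro (i | i)
    · show (Dᴴ * D) *ᵥ emb1 ⇑(hB.eigenvectorBasis i.1) = _
      rw [hDh, ← Matrix.mulVec_mulVec, hD, dirSum_mulVec_emb1, hB.mulVec_eigenvectorBasis,
        emb1_real_smul, Matrix.mulVec_smul, dirSum_mulVec_emb1, hB.mulVec_eigenvectorBasis,
        emb1_real_smul, smul_smul]
      show _ = ((hB.eigenvalues i.1 ^ 2 : ℝ) : ℂ) • emb1 ⇑(hB.eigenvectorBasis i.1)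
      ext j
      simp [Pi.smul_apply, Complex.real_smul, sq]
    · show (Dᴴ * D) *ᵥ emb2 ⇑(hB.eigenvectorBasis i.1) = _
      rw [hDh, ← Matrix.mulVec_mulVec, hD, dirSum_mulVec_emb2, hB.mulVec_eigenvectorBasis,
        emb2_real_smul, Matrix.mulVec_smul, dirSum_mulVec_emb2, hB.mulVec_eigenvectorBasis,
        emb2_real_smul, smul_smul]
      show _ = ((hB.eigenvalues i.1 ^ 2 : ℝ) : ℂ) • emb2 ⇑(hB.eigenvectorBasis i.1)
      ext j
      simp [Pi.smul_apply, Complex.real_smul, sq]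
  have hcard : Fintype.card ({i // i ∈ S} ⊕ {i // i ∈ S}) = 2 * cnt hB t := by
    rw [Fintype.card_sum, Fintype.card_coe]
    show S.card + S.card = 2 * S.card
    ring
  rw [← hcard]
  refine card_le_cnt _ (t ^ 2) hFo (fun x hx hx0 => ?_)
  refine lt_quad_on_span hFo (Dᴴ * D) μ hNF (c := t ^ 2) ?_ hx hx0
  rintro (i | i) <;>
  · have hk := i.2
    simp only [hS, Finset.mem_filter] at hk
    have : t < hB.eigenvalues i.1 := hk.2
    simpa [hμ] using by nlinarith

end Steps

end SvalAux

open Finset Matrix Submodule Set in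
open scoped Classical in
theorem sval_le_sval_dirSum {v : ℕ} {A B : Matrix (Fin v) (Fin v) ℂ}
    (hA : A.IsHermitian) (hB : B.IsHermitian)
    (h1 : (B - A).PosSemidef) (h2 : (B + A).PosSemidef) :
    ∀ j : Fin v, sval A j ≤ sval (dirSum B B) (Fin.castAdd v j) := by
  intro j
  set eA : Fin v → ℝ :=
    fun i => Real.sqrt ((Matrix.posSemidef_conjTranspose_mul_self A).isHermitian.eigenvalues i)
    with heA
  set eD : Fin (v+v) → ℝ :=
    fun i => Real.sqrt
      ((Matrix.posSemidef_conjTranspose_mul_self (dirSum B B)).isHermitian.eigenvalues i)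
    with heD
  set σ := Tuple.sort (fun i => -(eA i)) with hσ
  set τ := Tuple.sort (fun i => -(eD i)) with hτ
  have hsvalA : sval A j = eA (σ j) := rfl
  have hsvalD : sval (dirSum B B) (Fin.castAdd v j) = eD (τ (Fin.castAdd v j)) := rfl
  rw [hsvalA, hsvalD]
  set t := eD (τ (Fin.castAdd v j)) with htdef
  have ht : (0:ℝ) ≤ t := Real.sqrt_nonneg _
  by_contra hcon
  push_neg at hcon
  have hmA : Monotone ((fun i => -(eA i)) ∘ σ) := Tuple.monotone_sort _
  have hmD : Monotone ((fun i => -(eD i)) ∘ τ) := Tuple.monotone_sort _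
  have hclaim1 : (j : ℕ) + 1 ≤
      cnt (Matrix.posSemidef_conjTranspose_mul_self A).isHermitian (t ^ 2) := by
    have hsub : (Finset.Iic j).image σ ⊆ Finset.univ.filter
        (fun i => t ^ 2 < (Matrix.posSemidef_conjTranspose_mul_self A).isHermitian.eigenvalues i) := by
      intro i hi
      obtain ⟨k, hk, rfl⟩ := Finset.mem_image.mp hi
      have hk' : k ≤ j := Finset.mem_Iic.mp hk
      have hmono : -(eA (σ k)) ≤ -(eA (σ j)) := hmA hk'
      have h5 : t < eA (σ k) := lt_of_lt_of_le hcon (by linarith)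
      have h6 := (Real.lt_sqrt ht).mp h5
      simpa only [Finset.mem_filter, Finset.mem_univ, true_and] using h6
    have hcnt : cnt (Matrix.posSemidef_conjTranspose_mul_self A).isHermitian (t ^ 2)
        = (Finset.univ.filter
        (fun i => t ^ 2 < (Matrix.posSemidef_conjTranspose_mul_self A).isHermitian.eigenvalues i)).card := rfl
    rw [hcnt]
    calc (j:ℕ) + 1 = (Finset.Iic j).card := (Fin.card_Iic j).symm
      _ = ((Finset.Iic j).image σ).card :=
          (Finset.card_image_of_injective _ σ.injective).symm
      _ ≤ _ := Finset.card_le_card hsub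
  have hclaim2 : cnt (Matrix.posSemidef_conjTranspose_mul_self (dirSum B B)).isHermitian (t ^ 2)
      ≤ (j : ℕ) := by
    have hsub : Finset.univ.filter
        (fun i => t ^ 2 <
          (Matrix.posSemidef_conjTranspose_mul_self (dirSum B B)).isHermitian.eigenvalues i) ⊆
        (Finset.Iio (Fin.castAdd v j)).image τ := by
      intro i hi
      simp only [Finset.mem_filter, Finset.mem_univ, true_and] at hi
      have h5 : t < eD i := (Real.lt_sqrt ht).mpr hi
      refine Finset.mem_image.mpr ⟨τ.symm i, ?_, by simp⟩
      rw [Finset.mem_Iio]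
      by_contra hge
      push_neg at hge
      have hmono := hmD hge
      simp only [Function.comp_apply, Equiv.apply_symm_apply] at hmono
      rw [← htdef] at hmono
      linarith
    have hcnt : cnt (Matrix.posSemidef_conjTranspose_mul_self (dirSum B B)).isHermitian (t ^ 2)
        = (Finset.univ.filter
        (fun i => t ^ 2 <
          (Matrix.posSemidef_conjTranspose_mul_self (dirSum B B)).isHermitian.eigenvalues i)).card := rfl
    rw [hcnt]
    calc _ ≤ ((Finset.Iio (Fin.castAdd v j)).image τ).card := Finset.card_le_card hsub
      _ = (Finset.Iio (Fin.castAdd v j)).card := Finset.card_image_of_injective _ τ.injective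
      _ = ((Fin.castAdd v j : Fin (v+v)) : ℕ) := Fin.card_Iio _
      _ = (j : ℕ) := by simp
  have hc1 := cnt_sq_le hA t
  have hc2 := cnt_abs_split hA t
  have hc3 := cnt_mono hA hB h1 t
  have hc4 := cnt_neg_le hA hB h2 t
  have hc5 := two_cnt_le hB ht
  omega
end

section
/- Let A, B be v×v Hermitian matrices. Then for every j, the j-th largest singular value satisfies t_j(AB + BA) ≤ t_j((A² + B²) ⊕ (A² + B²)). -/
open ComplexOrder

open scoped InnerProductSpace
open Matrix

namespace SvalProof

noncomputable section

variable {E : Type*} [NormedAddCommGroup E] [InnerProductSpace ℂ E]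

/-- Master counting lemma. -/
lemma cnt_le_cnt {ι ι' : Type*} [Fintype ι] [Fintype ι']
    (T T' : E →ₗ[ℂ] E)
    (u : ι → E) (hu : Orthonormal ℂ u) (μ : ι → ℝ)
    (hTu : ∀ i, T (u i) = (μ i : ℂ) • u i)
    (w : OrthonormalBasis ι' ℂ E) (ν : ι' → ℝ)
    (hTw : ∀ j, T' (w j) = (ν j : ℂ) • w j)
    (hq : ∀ x : E, (⟪x, T x⟫_ℂ).re ≤ (⟪x, T' x⟫_ℂ).re) (c : ℝ) :
    Nat.card {i // c < μ i} ≤ Nat.card {j // c < ν j} := by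
  classical
  set s := {i // c < μ i}
  set s' := {j // c < ν j}
  let ext : (s → ℂ) →ₗ[ℂ] (ι → ℂ) := Function.ExtendByZero.linearMap ℂ Subtype.val
  let comb : (ι → ℂ) →ₗ[ℂ] E := Fintype.linearCombination ℂ u
  let restr : E →ₗ[ℂ] (s' → ℂ) :=
    (LinearMap.funLeft ℂ ℂ (Subtype.val : s' → ι')) ∘ₗ
      ((WithLp.linearEquiv 2 ℂ (ι' → ℂ)).toLinearMap ∘ₗ w.repr.toLinearEquiv.toLinearMap)
  let Φ : (s → ℂ) →ₗ[ℂ] (s' → ℂ) := restr ∘ₗ comb ∘ₗ ext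
  have hinj : Function.Injective Φ := by
    rw [injective_iff_map_eq_zero]
    intro a ha
    set g : ι → ℂ := Function.extend Subtype.val a 0 with hg
    set x : E := ∑ i, g i • u i with hxdef
    have hcomb : comb (ext a) = x := by
      simp [comb, ext, Fintype.linearCombination_apply, hg, x]
    have hb0 : ∀ j : s', w.repr x (j : ι') = 0 := by
      intro j
      have := congrFun ha j
      simpa [Φ, restr, hcomb, LinearMap.funLeft] using this
    have hgext : ∀ p : s, g (p : ι) = a p := fun p => Subtype.val_injective.extend_apply a 0 p
    have hgz : ∀ i : ι, ¬ (c < μ i) → g i = 0 := by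
      intro i hi
      rw [hg, Function.extend_apply']
      · rfl
      · rintro ⟨p, hp⟩; exact hi (hp ▸ p.2)
    have hx : x = 0 := by
      by_contra hx0
      -- u-side computation
      have hinner_uu : (⟪x, x⟫_ℂ).re = ∑ i, Complex.normSq (g i) := by
        rw [hxdef, hu.inner_sum g g Finset.univ]
        simp [Complex.normSq_apply]
      have hTx : T x = ∑ i, (g i * (μ i : ℂ)) • u i := by
        rw [hxdef, map_sum]
        exact Finset.sum_congr rfl fun i _ => by rw [_root_.map_smul, hTu i, smul_smul]
      have hinner_uT : (⟪x, T x⟫_ℂ).re = ∑ i, μ i * Complex.normSq (g i) := by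
        rw [hTx, hxdef, hu.inner_sum g (fun i => g i * (μ i : ℂ)) Finset.univ]
        rw [Complex.re_sum]
        refine Finset.sum_congr rfl fun i _ => ?_
        have : (starRingEnd ℂ) (g i) * (g i * (μ i : ℂ))
            = ((μ i : ℝ) : ℂ) * ((Complex.normSq (g i) : ℝ) : ℂ) := by
          rw [Complex.normSq_eq_conj_mul_self]; ring
        rw [this, ← Complex.ofReal_mul, Complex.ofReal_re]
      -- strictness
      have hstrict : c * (⟪x, x⟫_ℂ).re < (⟪x, T x⟫_ℂ).re := by
        rw [hinner_uu, hinner_uT, Finset.mul_sum]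
        obtain ⟨i0, hi0⟩ : ∃ i, g i ≠ 0 := by
          by_contra hall
          push_neg at hall
          exact hx0 (by rw [hxdef]; simp [hall])
        have hi0lt : c < μ i0 := by
          by_contra hn; exact hi0 (hgz i0 hn)
        refine Finset.sum_lt_sum (fun i _ => ?_) ⟨i0, Finset.mem_univ i0, ?_⟩
        · by_cases hi : c < μ i
          · exact mul_le_mul_of_nonneg_right hi.le (Complex.normSq_nonneg _)
          · rw [hgz i hi]; simp
        · have : 0 < Complex.normSq (g i0) := Complex.normSq_pos.mpr hi0
          exact (mul_lt_mul_of_pos_right hi0lt this)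
      -- w-side computation
      set b : ι' → ℂ := fun j => w.repr x j with hbdef
      have hxw : x = ∑ j, b j • w j := (w.sum_repr x).symm
      have hinner_ww : (⟪x, x⟫_ℂ).re = ∑ j, Complex.normSq (b j) := by
        rw [hxw, w.orthonormal.inner_sum b b Finset.univ]
        simp [Complex.normSq_apply]
      have hT'x : T' x = ∑ j, (b j * (ν j : ℂ)) • w j := by
        conv_lhs => rw [hxw]
        rw [map_sum]
        exact Finset.sum_congr rfl fun j _ => by rw [_root_.map_smul, hTw j, smul_smul]
      have hinner_wT : (⟪x, T' x⟫_ℂ).re = ∑ j, ν j * Complex.normSq (b j) := by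
        rw [hT'x]
        conv_lhs => rw [hxw]
        rw [w.orthonormal.inner_sum b (fun j => b j * (ν j : ℂ)) Finset.univ, Complex.re_sum]
        refine Finset.sum_congr rfl fun j _ => ?_
        have : (starRingEnd ℂ) (b j) * (b j * (ν j : ℂ))
            = ((ν j : ℝ) : ℂ) * ((Complex.normSq (b j) : ℝ) : ℂ) := by
          rw [Complex.normSq_eq_conj_mul_self]; ring
        rw [this, ← Complex.ofReal_mul, Complex.ofReal_re]
      have hupper : (⟪x, T' x⟫_ℂ).re ≤ c * (⟪x, x⟫_ℂ).re := by
        rw [hinner_ww, hinner_wT, Finset.mul_sum]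
        refine Finset.sum_le_sum fun j _ => ?_
        by_cases hj : c < ν j
        · rw [show b j = 0 from hb0 ⟨j, hj⟩]; simp
        · exact mul_le_mul_of_nonneg_right (not_lt.mp hj) (Complex.normSq_nonneg _)
      have := hq x
      linarith
    ext p
    have hlin := hu.linearIndependent
    rw [linearIndependent_iff'] at hlin
    have hz := hlin Finset.univ g (by rw [← hxdef, hx]) (p : ι) (Finset.mem_univ _)
    rw [← hgext p] at *
    simpa using hz
  calc Nat.card s = Module.finrank ℂ (s → ℂ) := by
        simp [Nat.card_eq_fintype_card, Module.finrank_pi]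
    _ ≤ Module.finrank ℂ (s' → ℂ) := LinearMap.finrank_le_finrank_of_injective hinj
    _ = Nat.card s' := by simp [Nat.card_eq_fintype_card, Module.finrank_pi]

lemma natCard_filter {α : Type*} [Fintype α] (p : α → Prop) [DecidablePred p] :
    Nat.card {i // p i} = (Finset.univ.filter p).card := by
  rw [Nat.card_eq_fintype_card, Fintype.card_subtype]

/-- quadratic form monotonicity from PSD of difference -/
lemma qf_mono {m : ℕ} {P Q : Matrix (Fin m) (Fin m) ℂ} (h : (Q - P).PosSemidef)
    (x : EuclideanSpace ℂ (Fin m)) :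
    (⟪x, Matrix.toEuclideanLin P x⟫_ℂ).re ≤ (⟪x, Matrix.toEuclideanLin Q x⟫_ℂ).re := by
  have key : ∀ R : Matrix (Fin m) (Fin m) ℂ,
      ⟪x, Matrix.toEuclideanLin R x⟫_ℂ =
        dotProduct (star (WithLp.equiv 2 _ x)) (R *ᵥ (WithLp.equiv 2 _ x)) := by
    intro R
    simp [PiLp.inner_apply, RCLike.inner_apply, dotProduct,
      Matrix.toEuclideanLin_apply, mul_comm]
  have h2 := h.dotProduct_mulVec_nonneg (WithLp.equiv 2 _ x)
  rw [Matrix.sub_mulVec, dotProduct_sub, Complex.le_def] at h2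
  rw [key, key]
  simp only [Complex.sub_re, Complex.zero_re] at h2
  linarith [h2.1]

lemma eigen_toEuclideanLin {m : ℕ} {P : Matrix (Fin m) (Fin m) ℂ}
    {f : EuclideanSpace ℂ (Fin m)} {r : ℝ}
    (h : P *ᵥ (WithLp.equiv 2 _ f) = r • (WithLp.equiv 2 _ f)) :
    Matrix.toEuclideanLin P f = (r : ℂ) • f := by
  rw [Matrix.toEuclideanLin_apply, show P *ᵥ f.ofLp = _ from h]
  ext i
  simp

variable {v : ℕ}

/-- extend a vector by zero into the left block -/
def extC (x : Fin v → ℂ) : Fin (v + v) → ℂ := Sum.elim x 0 ∘ finSumFinEquiv.symm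

/-- extend a vector by zero into the right block -/
def extC' (x : Fin v → ℂ) : Fin (v + v) → ℂ := Sum.elim (0 : Fin v → ℂ) x ∘ finSumFinEquiv.symm

@[simp] lemma finSumFinEquiv_symm_addNat' (k : Fin v) :
    finSumFinEquiv.symm (k.addNat v) = Sum.inr k := by
  have h : k.addNat v = Fin.natAdd v k := by ext; simp [Nat.add_comm]
  rw [h, finSumFinEquiv_symm_apply_natAdd]

@[simp] lemma extC_castAdd (x : Fin v → ℂ) (k : Fin v) : extC x (Fin.castAdd v k) = x k := by
  simp [extC]

@[simp] lemma extC_natAdd (x : Fin v → ℂ) (k : Fin v) : extC x (Fin.natAdd v k) = 0 := by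
  unfold extC
  rw [Function.comp_apply, finSumFinEquiv_symm_apply_natAdd]
  rfl

@[simp] lemma extC_addNat (x : Fin v → ℂ) (k : Fin v) : extC x (k.addNat v) = 0 := by
  have h : k.addNat v = Fin.natAdd v k := by ext; simp [Nat.add_comm]
  rw [h, extC_natAdd]

@[simp] lemma extC'_castAdd (x : Fin v → ℂ) (k : Fin v) : extC' x (Fin.castAdd v k) = 0 := by
  simp [extC']

@[simp] lemma extC'_natAdd (x : Fin v → ℂ) (k : Fin v) : extC' x (Fin.natAdd v k) = x k := by
  unfold extC'
  rw [Function.comp_apply, finSumFinEquiv_symm_apply_natAdd]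
  rfl

@[simp] lemma extC'_addNat (x : Fin v → ℂ) (k : Fin v) : extC' x (k.addNat v) = x k := by
  have h : k.addNat v = Fin.natAdd v k := by ext; simp [Nat.add_comm]
  rw [h, extC'_natAdd]

lemma extC_smul (r : ℝ) (x : Fin v → ℂ) : extC (r • x) = r • extC x := by
  funext k
  simp only [extC, Function.comp_apply, Pi.smul_apply]
  rcases finSumFinEquiv.symm k with i | i <;> simp

lemma extC'_smul (r : ℝ) (x : Fin v → ℂ) : extC' (r • x) = r • extC' x := by
  funext k
  simp only [extC', Function.comp_apply, Pi.smul_apply]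
  rcases finSumFinEquiv.symm k with i | i <;> simp

lemma dirSum_mulVec_extC (P Q : Matrix (Fin v) (Fin v) ℂ) (x : Fin v → ℂ) :
    dirSum P Q *ᵥ extC x = extC (P *ᵥ x) := by
  rw [dirSum, Matrix.reindex_apply,
    Matrix.submatrix_mulVec_equiv _ _ _ finSumFinEquiv.symm]
  have h1 : extC x ∘ ⇑finSumFinEquiv.symm.symm = Sum.elim x 0 := by
    funext sk; cases sk <;> simp [extC]
  rw [h1, Matrix.fromBlocks_mulVec]
  funext k
  rcases h : finSumFinEquiv.symm k with i | i <;>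
    simp [extC, h, Matrix.mulVec_zero, Matrix.zero_mulVec]

lemma dirSum_mulVec_extC' (P Q : Matrix (Fin v) (Fin v) ℂ) (x : Fin v → ℂ) :
    dirSum P Q *ᵥ extC' x = extC' (Q *ᵥ x) := by
  rw [dirSum, Matrix.reindex_apply,
    Matrix.submatrix_mulVec_equiv _ _ _ finSumFinEquiv.symm]
  have h1 : extC' x ∘ ⇑finSumFinEquiv.symm.symm = Sum.elim (0 : Fin v → ℂ) x := by
    funext sk; cases sk <;> simp [extC']
  rw [h1, Matrix.fromBlocks_mulVec]
  funext k
  rcases h : finSumFinEquiv.symm k with i | i <;>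
    simp [extC', h, Matrix.mulVec_zero, Matrix.zero_mulVec]

lemma dirSum_conjTranspose (P Q : Matrix (Fin v) (Fin v) ℂ) :
    (dirSum P Q)ᴴ = dirSum Pᴴ Qᴴ := by
  simp [dirSum, Matrix.reindex_apply, Matrix.conjTranspose_submatrix,
    Matrix.fromBlocks_conjTranspose]

lemma dirSum_mul (P Q R S : Matrix (Fin v) (Fin v) ℂ) :
    dirSum P Q * dirSum R S = dirSum (P * R) (Q * S) := by
  simp [dirSum, Matrix.reindex_apply, Matrix.submatrix_mul_equiv,
    Matrix.fromBlocks_multiply]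

/-- the block family built from an orthonormal family -/
def blockFam (u : Fin v → EuclideanSpace ℂ (Fin v)) :
    Fin v ⊕ Fin v → EuclideanSpace ℂ (Fin (v + v)) :=
  Sum.elim (fun i => (WithLp.equiv 2 _).symm (extC (WithLp.equiv 2 _ (u i))))
    (fun i => (WithLp.equiv 2 _).symm (extC' (WithLp.equiv 2 _ (u i))))

lemma blockFam_orthonormal {u : Fin v → EuclideanSpace ℂ (Fin v)}
    (hu : Orthonormal ℂ u) : Orthonormal ℂ (blockFam u) := by
  rw [orthonormal_iff_ite]
  have hins : ∀ i j, ⟪u i, u j⟫_ℂ = if i = j then 1 else 0 := orthonormal_iff_ite.mp hu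
  have hinner : ∀ i j : Fin v,
      (∑ k : Fin v, (starRingEnd ℂ) (u i k) * (u j k)) = if i = j then 1 else 0 := by
    intro i j
    rw [← hins i j]
    simp [PiLp.inner_apply, RCLike.inner_apply, mul_comm]
  intro s t
  rcases s with i | i <;> rcases t with j | j <;>
    simp [blockFam, PiLp.inner_apply, RCLike.inner_apply, Fin.sum_univ_add, hinner,
      Sum.inl.injEq, Sum.inr.injEq]
  all_goals rw [← hinner]; exact Finset.sum_congr rfl fun _ _ => mul_comm _ _

lemma antitone_sorted {m : ℕ} (e : Fin m → ℝ) :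
    Antitone (fun j => e (Tuple.sort (fun i => -(e i)) j)) := by
  intro i j hij
  have := Tuple.monotone_sort (fun i => -(e i)) hij
  simpa using this

lemma sorted_le {m m' : ℕ} (a : Fin m → ℝ) (b : Fin m' → ℝ) (ha : Antitone a) (hb : Antitone b)
    (hcnt : ∀ c : ℝ, Nat.card {i // c < a i} ≤ Nat.card {i // c < b i})
    (j : Fin m) (j' : Fin m') (hjj : (j : ℕ) = (j' : ℕ)) : a j ≤ b j' := by
  classical
  by_contra hcon
  push_neg at hcon
  have h1 : (j : ℕ) + 1 ≤ Nat.card {i // b j' < a i} := by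
    rw [Nat.card_eq_fintype_card, Fintype.card_subtype]
    have hsub : Finset.Iic j ⊆ Finset.univ.filter (fun i => b j' < a i) := by
      intro i hi
      simp only [Finset.mem_filter, Finset.mem_univ, true_and]
      exact lt_of_lt_of_le hcon (ha (Finset.mem_Iic.mp hi))
    have := Finset.card_le_card hsub
    rwa [Fin.card_Iic] at this
  have h2 : Nat.card {i // b j' < b i} ≤ (j' : ℕ) := by
    rw [Nat.card_eq_fintype_card, Fintype.card_subtype]
    have hsub : Finset.univ.filter (fun i => b j' < b i) ⊆ Finset.Iio j' := by
      intro i hi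
      simp only [Finset.mem_filter] at hi
      rw [Finset.mem_Iio]
      by_contra hge
      exact absurd (hb (not_lt.mp hge)) (not_le.mpr hi.2)
    have := Finset.card_le_card hsub
    rwa [Fin.card_Iio] at this
  have := hcnt (b j')
  omega

lemma natCard_perm {m : ℕ} (e : Fin m → ℝ) (σ : Equiv.Perm (Fin m)) (c : ℝ) :
    Nat.card {i // c < e (σ i)} = Nat.card {i // c < e i} :=
  Nat.card_congr (σ.subtypeEquiv (fun _ => Iff.rfl))

/-- reduce `sval` comparison to counting -/
lemma sval_le_of_cnt {m m' : ℕ} (X : Matrix (Fin m) (Fin m) ℂ) (Y : Matrix (Fin m') (Fin m') ℂ)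
    (hcnt : ∀ c : ℝ, Nat.card {i // c <
        Real.sqrt ((Matrix.posSemidef_conjTranspose_mul_self X).isHermitian.eigenvalues i)} ≤
      Nat.card {k // c <
        Real.sqrt ((Matrix.posSemidef_conjTranspose_mul_self Y).isHermitian.eigenvalues k)})
    (j : Fin m) (j' : Fin m') (hjj : (j : ℕ) = (j' : ℕ)) : sval X j ≤ sval Y j' := by
  set eX : Fin m → ℝ := fun i =>
    Real.sqrt ((Matrix.posSemidef_conjTranspose_mul_self X).isHermitian.eigenvalues i) with heX
  set eY : Fin m' → ℝ := fun k =>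
    Real.sqrt ((Matrix.posSemidef_conjTranspose_mul_self Y).isHermitian.eigenvalues k) with heY
  have := sorted_le (fun j => eX (Tuple.sort (fun i => -(eX i)) j))
    (fun j => eY (Tuple.sort (fun i => -(eY i)) j))
    (antitone_sorted eX) (antitone_sorted eY)
    (fun c => by
      rw [natCard_perm eX (Tuple.sort (fun i => -(eX i))) c,
        natCard_perm eY (Tuple.sort (fun i => -(eY i))) c]
      exact hcnt c) j j' hjj
  exact this

lemma main_cnt {v : ℕ} {A B : Matrix (Fin v) (Fin v) ℂ}
    (hA : A.IsHermitian) (hB : B.IsHermitian) (c : ℝ) :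
    Nat.card {i : Fin v // c < Real.sqrt
        ((Matrix.posSemidef_conjTranspose_mul_self (A * B + B * A)).isHermitian.eigenvalues i)} ≤
    Nat.card {k : Fin (v + v) // c < Real.sqrt
        ((Matrix.posSemidef_conjTranspose_mul_self
          (dirSum (A ^ 2 + B ^ 2) (A ^ 2 + B ^ 2))).isHermitian.eigenvalues k)} := by
  classical
  rcases lt_or_ge c 0 with hc | hc
  · have hR : Nat.card {k : Fin (v + v) // c < Real.sqrt
        ((Matrix.posSemidef_conjTranspose_mul_self
          (dirSum (A ^ 2 + B ^ 2) (A ^ 2 + B ^ 2))).isHermitian.eigenvalues k)} = v + v := by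
      rw [Nat.card_congr (Equiv.subtypeUnivEquiv fun k =>
        lt_of_lt_of_le hc (Real.sqrt_nonneg _))]
      simp
    have hL := Finite.card_subtype_le (α := Fin v) (fun i => c < Real.sqrt
        ((Matrix.posSemidef_conjTranspose_mul_self (A * B + B * A)).isHermitian.eigenvalues i))
    simp only [Nat.card_eq_fintype_card, Fintype.card_fin] at hL hR ⊢
    omega
  · set M := A * B + B * A with hMdef
    set N := A ^ 2 + B ^ 2 with hNdef
    set S := dirSum N N with hSdef
    have hM : M.IsHermitian := by
      show Mᴴ = M
      rw [hMdef, Matrix.conjTranspose_add, Matrix.conjTranspose_mul, Matrix.conjTranspose_mul,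
        hA.eq, hB.eq, add_comm]
    have hN : N.IsHermitian := (hA.pow 2).add (hB.pow 2)
    have hA2 : (A ^ 2).PosSemidef := by
      have h := Matrix.posSemidef_conjTranspose_mul_self A
      rw [hA.eq] at h
      rwa [pow_two]
    have hB2 : (B ^ 2).PosSemidef := by
      have h := Matrix.posSemidef_conjTranspose_mul_self B
      rw [hB.eq] at h
      rwa [pow_two]
    have hNpsd : N.PosSemidef := hA2.add hB2
    have psd1 : (N - M).PosSemidef := by
      have h := Matrix.posSemidef_conjTranspose_mul_self (A - B)
      have he : (A - B)ᴴ * (A - B) = N - M := by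
        rw [Matrix.conjTranspose_sub, hA.eq, hB.eq, hMdef, hNdef]
        noncomm_ring
      rwa [he] at h
    have psd2 : (N - -M).PosSemidef := by
      rw [sub_neg_eq_add]
      have h := Matrix.posSemidef_conjTranspose_mul_self (A + B)
      have he : (A + B)ᴴ * (A + B) = N + M := by
        rw [Matrix.conjTranspose_add, hA.eq, hB.eq, hMdef, hNdef]
        noncomm_ring
      rwa [he] at h
    set uM := hM.eigenvectorBasis with huM
    set lM := hM.eigenvalues with hlM
    set uN := hN.eigenvectorBasis with huN
    set lN := hN.eigenvalues with hlN
    have hMMps := Matrix.posSemidef_conjTranspose_mul_self M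
    have hSSps := Matrix.posSemidef_conjTranspose_mul_self S
    set e2M := hMMps.isHermitian.eigenvalues with he2M
    set e2S := hSSps.isHermitian.eigenvalues with he2S
    have hMM : Mᴴ * M = M * M := by rw [hM.eq]
    have hSconj : Sᴴ = S := by rw [hSdef, dirSum_conjTranspose, hN.eq]
    have hSS : Sᴴ * S = dirSum (N * N) (N * N) := by rw [hSconj, hSdef, dirSum_mul]
    -- eigen conditions
    have hTuMM : ∀ k, Matrix.toEuclideanLin (Mᴴ * M) (hMMps.isHermitian.eigenvectorBasis k)
        = (e2M k : ℂ) • hMMps.isHermitian.eigenvectorBasis k :=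
      fun k => eigen_toEuclideanLin (hMMps.isHermitian.mulVec_eigenvectorBasis k)
    have hsq : ∀ (r : ℝ) (x : Fin v → ℂ), M *ᵥ x = r • x → (Mᴴ * M) *ᵥ x = (r ^ 2) • x := by
      intro r x hx
      rw [hMM, ← Matrix.mulVec_mulVec, hx, Matrix.mulVec_smul, hx, smul_smul, ← sq]
    have hTuM2 : ∀ i, Matrix.toEuclideanLin (Mᴴ * M) (uM i) = ((lM i ^ 2 : ℝ) : ℂ) • uM i :=
      fun i => eigen_toEuclideanLin (hsq (lM i) _ (hM.mulVec_eigenvectorBasis i))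
    have hTM : ∀ i, Matrix.toEuclideanLin M (uM i) = ((lM i : ℝ) : ℂ) • uM i :=
      fun i => eigen_toEuclideanLin (hM.mulVec_eigenvectorBasis i)
    have hTnegM : ∀ i, Matrix.toEuclideanLin (-M) (uM i) = ((-lM i : ℝ) : ℂ) • uM i := by
      intro i
      apply eigen_toEuclideanLin
      simp only [WithLp.equiv_apply]
      rw [Matrix.neg_mulVec, hM.mulVec_eigenvectorBasis i, neg_smul]
    have hTN : ∀ i, Matrix.toEuclideanLin N (uN i) = ((lN i : ℝ) : ℂ) • uN i :=
      fun i => eigen_toEuclideanLin (hN.mulVec_eigenvectorBasis i)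
    have hTuSS : ∀ k, Matrix.toEuclideanLin (Sᴴ * S) (hSSps.isHermitian.eigenvectorBasis k)
        = (e2S k : ℂ) • hSSps.isHermitian.eigenvectorBasis k :=
      fun k => eigen_toEuclideanLin (hSSps.isHermitian.mulVec_eigenvectorBasis k)
    set ν : Fin v ⊕ Fin v → ℝ := Sum.elim (fun i => lN i ^ 2) (fun i => lN i ^ 2) with hν
    have hsqN : ∀ (i : Fin v), (N * N) *ᵥ (WithLp.equiv 2 _ (uN i))
        = (lN i ^ 2) • (WithLp.equiv 2 _ (uN i)) := by
      intro i
      simp only [WithLp.equiv_apply]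
      rw [← Matrix.mulVec_mulVec, hN.mulVec_eigenvectorBasis i, Matrix.mulVec_smul,
        hN.mulVec_eigenvectorBasis i, smul_smul, ← sq]
    have hTblk : ∀ s, Matrix.toEuclideanLin (Sᴴ * S) (blockFam (⇑uN) s)
        = ((ν s : ℝ) : ℂ) • blockFam (⇑uN) s := by
      intro s
      apply eigen_toEuclideanLin
      rcases s with i | i
      · show (Sᴴ * S) *ᵥ (WithLp.equiv 2 _ ((WithLp.equiv 2 _).symm
          (extC (WithLp.equiv 2 _ (uN i))))) = _
        rw [Equiv.apply_symm_apply, hSS, dirSum_mulVec_extC, hsqN i, extC_smul]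
        show _ = (lN i ^ 2) • (WithLp.equiv 2 _ ((WithLp.equiv 2 _).symm
          (extC (WithLp.equiv 2 _ (uN i)))))
        rw [Equiv.apply_symm_apply]
      · show (Sᴴ * S) *ᵥ (WithLp.equiv 2 _ ((WithLp.equiv 2 _).symm
          (extC' (WithLp.equiv 2 _ (uN i))))) = _
        rw [Equiv.apply_symm_apply, hSS, dirSum_mulVec_extC', hsqN i, extC'_smul]
        show _ = (lN i ^ 2) • (WithLp.equiv 2 _ ((WithLp.equiv 2 _).symm
          (extC' (WithLp.equiv 2 _ (uN i)))))
        rw [Equiv.apply_symm_apply]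
    -- counting chain
    have step1 : Nat.card {k // c ^ 2 < e2M k} ≤ Nat.card {i // c ^ 2 < lM i ^ 2} :=
      cnt_le_cnt _ _ _ hMMps.isHermitian.eigenvectorBasis.orthonormal e2M hTuMM
        uM (fun i => lM i ^ 2) hTuM2 (fun x => le_rfl) (c ^ 2)
    have step3a : Nat.card {i // c < lM i} ≤ Nat.card {i // c < lN i} :=
      cnt_le_cnt _ _ _ uM.orthonormal lM hTM uN lN hTN (fun x => qf_mono psd1 x) c
    have step3b : Nat.card {i // c < -lM i} ≤ Nat.card {i // c < lN i} :=
      cnt_le_cnt _ _ _ uM.orthonormal (fun i => -lM i) hTnegM uN lN hTN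
        (fun x => qf_mono psd2 x) c
    have step5 : Nat.card {s // c ^ 2 < ν s} ≤ Nat.card {k // c ^ 2 < e2S k} :=
      cnt_le_cnt _ _ _ (blockFam_orthonormal uN.orthonormal) ν hTblk
        hSSps.isHermitian.eigenvectorBasis e2S hTuSS (fun x => le_rfl) (c ^ 2)
    have step2 : Nat.card {i // c ^ 2 < lM i ^ 2}
        ≤ Nat.card {i // c < lM i} + Nat.card {i // c < -lM i} := by
      rw [natCard_filter, natCard_filter, natCard_filter]
      have hiff : ∀ i ∈ Finset.univ, (c ^ 2 < lM i ^ 2) ↔ (c < lM i ∨ c < -lM i) := by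
        intro i _
        constructor
        · intro h
          by_contra hn
          push_neg at hn
          nlinarith [hn.1, hn.2]
        · rintro (h | h) <;> nlinarith
      rw [Finset.filter_congr hiff, Finset.filter_or]
      exact Finset.card_union_le _ _
    have step4 : Nat.card {i // c < lN i} + Nat.card {i // c < lN i}
        = Nat.card {s // c ^ 2 < ν s} := by
      rw [Nat.card_congr (Equiv.subtypeSum (p := fun s => c ^ 2 < ν s)), Nat.card_sum]
      congr 1 <;>
      · apply Nat.card_congr
        apply Equiv.subtypeEquivRight
        intro i
        simp only [hν, Sum.elim_inl, Sum.elim_inr]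
        exact (pow_lt_pow_iff_left₀ hc (hNpsd.eigenvalues_nonneg i) (by norm_num)).symm
    have step6L : Nat.card {i : Fin v // c < Real.sqrt (e2M i)}
        = Nat.card {i // c ^ 2 < e2M i} :=
      Nat.card_congr (Equiv.subtypeEquivRight fun i => Real.lt_sqrt hc)
    have step6R : Nat.card {k : Fin (v + v) // c < Real.sqrt (e2S k)}
        = Nat.card {k // c ^ 2 < e2S k} :=
      Nat.card_congr (Equiv.subtypeEquivRight fun k => Real.lt_sqrt hc)
    rw [step6L, step6R]
    omega

theorem sval_main {v : ℕ} {A B : Matrix (Fin v) (Fin v) ℂ}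
    (hA : A.IsHermitian) (hB : B.IsHermitian) :
    ∀ j : Fin v,
      sval (A * B + B * A) j ≤
        sval (dirSum (A ^ 2 + B ^ 2) (A ^ 2 + B ^ 2)) (Fin.castAdd v j) := by
  intro j
  exact sval_le_of_cnt _ _ (fun c => main_cnt hA hB c) j (Fin.castAdd v j) rfl

end

end SvalProof

theorem sval_mul_add_mul_le {v : ℕ} {A B : Matrix (Fin v) (Fin v) ℂ}
    (hA : A.IsHermitian) (hB : B.IsHermitian) :
    ∀ j : Fin v,
      sval (A * B + B * A) j ≤
        sval (dirSum (A ^ 2 + B ^ 2) (A ^ 2 + B ^ 2)) (Fin.castAdd v j) := by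
  intro j
  exact SvalProof.sval_main hA hB j
end
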